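/- The surface S₄ = {(x,y,z) ∈ ℂ³ : x² + y² + z² + xyz = 4} has exactly four singular points, namely (-2,-2,-2), (-2,2,2), (2,-2,2), and (2,2,-2). -/
import Mathlib


/-- The Cayley cubic `S₄` has exactly four singular points. -/
theorem singular_points_S4 :
    {p : ℂ × ℂ × ℂ |
      p.1 ^ 2 + p.2.1 ^ 2 + p.2.2 ^ 2 + p.1 * p.2.1 * p.2.2 = 4 ∧
      2 * p.1 + p.2.1 * p.2.2 = 0 ∧
      2 * p.2.1 + p.1 * p.2.2 = 0 ∧
      2 * p.2.2 + p.1 * p.2.1 = 0} =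
    {((-2 : ℂ), (-2 : ℂ), (-2 : ℂ)), ((-2 : ℂ), (2 : ℂ), (2 : ℂ)),
      ((2 : ℂ), (-2 : ℂ), (2 : ℂ)), ((2 : ℂ), (2 : ℂ), (-2 : ℂ))} := by
  ext ⟨x, y, z⟩
  simp only [Set.mem_setOf_eq, Set.mem_insert_iff, Set.mem_singleton_iff, Prod.mk.injEq]
  constructor
  · rintro ⟨h1, h2, h3, h4⟩
    have e1 : (x - y) * (2 - z) = 0 := by linear_combination h2 - h3
    rcases mul_eq_zero.1 e1 with hxy | hz
    · -- x = y
      have hxy' : x = y := sub_eq_zero.1 hxy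
      subst hxy'
      have e3 : x * (2 + z) = 0 := by linear_combination h2
      rcases mul_eq_zero.1 e3 with hx0 | hz2
      · exfalso
        subst hx0
        have hz0 : z = 0 := by linear_combination h4 / 2
        subst hz0
        norm_num at h1
      · have hz' : z = -2 := by linear_combination hz2
        subst hz'
        have e4 : (x - 2) * (x + 2) = 0 := by linear_combination h4
        rcases mul_eq_zero.1 e4 with h | h
        · right; right; right
          exact ⟨by linear_combination h, by linear_combination h, rfl⟩
        · left
          exact ⟨by linear_combination h, by linear_combination h, rfl⟩
    · -- z = 2
      have hz' : z = 2 := by linear_combination -hz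
      subst hz'
      have e2 : (x + y) * 4 = 0 := by linear_combination h2 + h3
      have hxy : x = -y := by
        have := mul_eq_zero.1 e2
        rcases this with h | h
        · linear_combination h
        · norm_num at h
      subst hxy
      have e4 : (y - 2) * (y + 2) = 0 := by linear_combination -h4
      rcases mul_eq_zero.1 e4 with h | h
      · right; left
        exact ⟨by linear_combination -h, by linear_combination h, rfl⟩
      · right; right; left
        exact ⟨by linear_combination -h, by linear_combination h, rfl⟩
  · rintro (⟨hx, hy, hz⟩ | ⟨hx, hy, hz⟩ | ⟨hx, hy, hz⟩ | ⟨hx, hy, hz⟩) <;>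
      subst hx <;> subst hy <;> subst hz <;> norm_num
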